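/- Let A be a d × n integer matrix, b ∈ ℤᵈ, c ∈ ℝⁿ with nonnegative entries, and g ∈ (ℝ_{>0})ᵈ. Define g·c ∈ ℝⁿ by (g·c)_j := c_j ∏_{i=1}^d g_i^{a_{ij}}, and let J(c) := {j : c_j ≠ 0}. Suppose the sum D(c) := Σ_{y ∈ ℤ_{≥0}ⁿ, Ay = b, y_j = 0 for all j ∉ J(c)} ∏_{j ∈ J(c)} c_j^{y_j}/y_j! satisfies 0 < D(c) < ∞. Then for every x ∈ ℤ_{≥0}ⁿ with Ax = b and x_j = 0 for all j ∉ J(c), the ratio (∏_{j ∈ J(c)} (g·c)_j^{x_j}/x_j!) / D(g·c) equals (∏_{j ∈ J(c)} c_j^{x_j}/x_j!) / D(c). In other words, the probability mass function of the A-distribution with parameter c is invariant under the action c ↦ g·c. -/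

import Mathlib

noncomputable section

/-- The term `∏_{j ∈ J(c)} v_j^{y_j} / y_j!`, where `J(c) = {j : c_j ≠ 0}`. -/
def Aterm {n : ℕ} (c v : Fin n → ℝ) (y : Fin n → ℕ) : ℝ :=
  ∏ j ∈ Finset.univ.filter (fun j => c j ≠ 0), v j ^ (y j) / (Nat.factorial (y j) : ℝ)

/-- The normalizing sum `D(v) = Σ_{y ≥ 0, Ay = b, y_j = 0 for j ∉ J(c)} ∏_{j∈J(c)} v_j^{y_j}/y_j!`. -/
def Dsum {d n : ℕ} (A : Matrix (Fin d) (Fin n) ℤ) (b : Fin d → ℤ) (c v : Fin n → ℝ) : ℝ :=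
  ∑' y : {y : Fin n → ℕ // (A.mulVec fun j => ((y j : ℤ))) = b ∧ ∀ j, c j = 0 → y j = 0},
    Aterm c v y.1

lemma zpow_sum_helper {ι : Type*} (x : ℝ) (hx : x ≠ 0) (s : Finset ι) (f : ι → ℤ) :
    x ^ (∑ j ∈ s, f j) = ∏ j ∈ s, x ^ f j := by
  classical
  induction s using Finset.cons_induction with
  | empty => simp
  | cons a s ha ih => rw [Finset.sum_cons, Finset.prod_cons, zpow_add₀ hx, ih]

lemma Aterm_scale {d n : ℕ} (A : Matrix (Fin d) (Fin n) ℤ) (b : Fin d → ℤ)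
    (c : Fin n → ℝ) (g : Fin d → ℝ) (hg : ∀ i, 0 < g i)
    (y : Fin n → ℕ) (hy : (A.mulVec fun j => ((y j : ℤ))) = b)
    (hy0 : ∀ j, c j = 0 → y j = 0) :
    Aterm c (fun j => c j * ∏ i, g i ^ (A i j)) y = (∏ i, g i ^ (b i)) * Aterm c c y := by
  classical
  unfold Aterm
  have key : ∀ j ∈ Finset.univ.filter (fun j => c j ≠ 0),
      (c j * ∏ i, g i ^ (A i j)) ^ (y j) / (Nat.factorial (y j) : ℝ) =
      (∏ i, g i ^ (A i j * (y j : ℤ))) * (c j ^ (y j) / (Nat.factorial (y j) : ℝ)) := by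
    intro j _
    rw [mul_pow, ← Finset.prod_pow]
    have : ∀ i, (g i ^ (A i j)) ^ (y j) = g i ^ (A i j * (y j : ℤ)) := by
      intro i
      rw [← zpow_natCast (g i ^ (A i j)) (y j), ← zpow_mul]
    simp only [this]
    ring
  rw [Finset.prod_congr rfl key, Finset.prod_mul_distrib]
  congr 1
  rw [Finset.prod_comm]
  refine Finset.prod_congr rfl fun i _ => ?_
  rw [← zpow_sum_helper (g i) (hg i).ne']
  congr 1
  have hb : ∑ j, A i j * (y j : ℤ) = b i := by
    have := congrFun hy i
    simpa [Matrix.mulVec, dotProduct] using this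
  rw [← hb]
  refine Finset.sum_subset (Finset.filter_subset _ _) ?_
  intro j _ hj
  simp only [Finset.mem_filter, Finset.mem_univ, true_and, not_not] at hj
  rw [hy0 j hj]
  simp

/-- The probability mass function of the `A`-distribution is invariant under
the action `c ↦ g·c` of `(ℝ_{>0})ᵈ`, where `(g·c)_j = c_j ∏_i g_i^{a_{ij}}`. -/
theorem Adist_pmf_invariant {d n : ℕ} (A : Matrix (Fin d) (Fin n) ℤ) (b : Fin d → ℤ)
    (c : Fin n → ℝ) (hc : ∀ j, 0 ≤ c j) (g : Fin d → ℝ) (hg : ∀ i, 0 < g i)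
    (hsummable : Summable (fun y :
      {y : Fin n → ℕ // (A.mulVec fun j => ((y j : ℤ))) = b ∧ ∀ j, c j = 0 → y j = 0} =>
        Aterm c c y.1))
    (hpos : 0 < Dsum A b c c) :
    ∀ x : Fin n → ℕ, (A.mulVec fun j => ((x j : ℤ))) = b → (∀ j, c j = 0 → x j = 0) →
      Aterm c (fun j => c j * ∏ i, g i ^ (A i j)) x /
          Dsum A b c (fun j => c j * ∏ i, g i ^ (A i j)) =
        Aterm c c x / Dsum A b c c := by
  intro x hx hx0
  have hK : (0 : ℝ) < ∏ i, g i ^ (b i) := Finset.prod_pos fun i _ => zpow_pos (hg i) _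
  have hD : Dsum A b c (fun j => c j * ∏ i, g i ^ (A i j)) =
      (∏ i, g i ^ (b i)) * Dsum A b c c := by
    unfold Dsum
    rw [← tsum_mul_left]
    exact tsum_congr fun y => Aterm_scale A b c g hg y.1 y.2.1 y.2.2
  rw [hD, Aterm_scale A b c g hg x hx hx0, mul_div_mul_left _ _ hK.ne']
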